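/- Under the hypotheses n > r_k², gcd(n,d) = 1, dn ∈ S, for each i ∈ Ap(S; dn), the element a = i + m_S(i)·n of M_n = ⟨n, n+r₁,…,n+r_k⟩ has exactly one factorization length in M_n, namely m_S(i). In particular M_n is homogeneous: every element of Ap(M_n; n) has a unique factorization length. -/
import Mathlib


open scoped Classical

/-- Membership in the additive submonoid of `ℕ` generated by `r 0, …, r (k-1)`. -/
def memGen {k : ℕ} (r : Fin k → ℕ) (a : ℕ) : Prop :=
  ∃ z : Fin k → ℕ, a = ∑ i, z i * r i

/-- The Apéry set `Ap(S; x) = {m ∈ S : m - x ∉ S}` (subtraction in `ℤ`,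
encoded by the guard `x ≤ m`). -/
def aperySet {k : ℕ} (r : Fin k → ℕ) (x : ℕ) : Set ℕ :=
  {m | memGen r m ∧ ¬(x ≤ m ∧ memGen r (m - x))}

/-- The set of factorization lengths of `a` in the monoid generated by `r`. -/
def lenSet {k : ℕ} (r : Fin k → ℕ) (a : ℕ) : Set ℕ :=
  {ℓ | ∃ z : Fin k → ℕ, a = ∑ i, z i * r i ∧ ℓ = ∑ i, z i}

/-- The minimum factorization length of `a` in the monoid generated by `r`. -/
noncomputable def minLen {k : ℕ} (r : Fin k → ℕ) (a : ℕ) : ℕ :=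
  sInf (lenSet r a)

/-- The generators `n, n + r 0, …, n + r (k-1)` of the shifted monoid `M_n`. -/
def shiftGen {k : ℕ} (n : ℕ) (r : Fin k → ℕ) : Fin (k + 1) → ℕ :=
  Fin.cons n (fun i => n + r i)

/-- The genus: the number of gaps of the monoid generated by `r`. -/
noncomputable def genus {k : ℕ} (r : Fin k → ℕ) : ℕ :=
  Set.ncard {m : ℕ | ¬ memGen r m}

/-- The Frobenius number: the largest gap of the monoid generated by `r`. -/
noncomputable def frob {k : ℕ} (r : Fin k → ℕ) : ℕ :=
  sSup {m : ℕ | ¬ memGen r m}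

/-- The set of pseudo-Frobenius numbers of the monoid generated by `r`. -/
def pseudoFrob {k : ℕ} (r : Fin k → ℕ) : Set ℕ :=
  {m | ¬ memGen r m ∧ ∀ x : ℕ, memGen r x → 0 < x → memGen r (m + x)}

section Aux

variable {κ : ℕ}

lemma lenSet_nonempty {r : Fin κ → ℕ} {x : ℕ} (hx : memGen r x) :
    (lenSet r x).Nonempty := by
  obtain ⟨z, hz⟩ := hx
  exact ⟨∑ i, z i, z, hz, rfl⟩

lemma minLen_mem {r : Fin κ → ℕ} {x : ℕ} (hx : memGen r x) :
    minLen r x ∈ lenSet r x := Nat.sInf_mem (lenSet_nonempty hx)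

lemma minLen_le {r : Fin κ → ℕ} {x q : ℕ} (hq : q ∈ lenSet r x) :
    minLen r x ≤ q := Nat.sInf_le hq

lemma memGen_of_lenSet {r : Fin κ → ℕ} {x q : ℕ} (hq : q ∈ lenSet r x) : memGen r x := by
  obtain ⟨z, hz, _⟩ := hq; exact ⟨z, hz⟩

lemma memGen_add {r : Fin κ → ℕ} {a b : ℕ} (ha : memGen r a) (hb : memGen r b) :
    memGen r (a + b) := by
  obtain ⟨z, hz⟩ := ha; obtain ⟨w, hw⟩ := hb
  exact ⟨fun j => z j + w j, by simp [hz, hw, add_mul, Finset.sum_add_distrib]⟩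

lemma memGen_mul {r : Fin κ → ℕ} (c : ℕ) {a : ℕ} (ha : memGen r a) :
    memGen r (c * a) := by
  obtain ⟨z, hz⟩ := ha
  exact ⟨fun j => c * z j, by rw [hz, Finset.mul_sum]; simp [mul_assoc]⟩

lemma gcd_dvd_memGen {r : Fin κ → ℕ} {x : ℕ} (hx : memGen r x) :
    Finset.univ.gcd r ∣ x := by
  obtain ⟨z, hz⟩ := hx
  rw [hz]
  exact Finset.dvd_sum fun j _ => dvd_mul_of_dvd_right (Finset.gcd_dvd (Finset.mem_univ j)) (z j)

/-- pigeonhole: a list of length ≥ N has a nonempty sublist whose `f`-sum is divisible by N -/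
lemma exists_block {α : Type*} (N : ℕ) (hN : 0 < N) (f : α → ℕ) (l : List α)
    (hlen : N ≤ l.length) :
    ∃ t : List α, t ≠ [] ∧ t.Sublist l ∧ N ∣ (t.map f).sum := by
  have hmaps : ∀ t ∈ Finset.range (N + 1),
      ((l.take t).map f).sum % N ∈ Finset.range N := by
    intro t _
    exact Finset.mem_range.mpr (Nat.mod_lt _ hN)
  obtain ⟨i, hi, j, hj, hne, heq⟩ :=
    Finset.exists_ne_map_eq_of_card_lt_of_maps_to (by simp) hmaps
  rw [Finset.mem_range] at hi hj
  -- reduce to the case i < j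
  suffices H : ∀ i j : ℕ, i < j → j ≤ N →
      ((l.take i).map f).sum % N = ((l.take j).map f).sum % N →
      ∃ t : List α, t ≠ [] ∧ t.Sublist l ∧ N ∣ (t.map f).sum by
    rcases hne.lt_or_gt with h | h
    · exact H i j h (by omega) heq
    · exact H j i h (by omega) heq.symm
  intro i j hij hjN heq
  set tt := (l.take j).drop i with htt
  have hlength : tt.length = j - i := by
    rw [htt, List.length_drop, List.length_take, Nat.min_eq_left (by omega : j ≤ l.length)]
  have hsplit : l.take j = l.take i ++ tt := by
    conv_lhs => rw [← List.take_append_drop i (l.take j)]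
    rw [← htt, List.take_take, Nat.min_eq_left hij.le]
  refine ⟨tt, ?_, ?_, ?_⟩
  · intro hnil
    rw [hnil] at hlength
    simp at hlength
    omega
  · exact ((l.take j).drop_sublist i).trans (l.take_sublist j)
  · have hsum : ((l.take j).map f).sum
        = ((l.take i).map f).sum + (tt.map f).sum := by
      rw [hsplit, List.map_append, List.sum_append]
    have hmod : ((l.take i).map f).sum ≡
        ((l.take i).map f).sum + (tt.map f).sum [MOD N] := by
      unfold Nat.ModEq
      rw [← hsum, heq]
    have := (Nat.modEq_iff_dvd' (Nat.le_add_right _ _)).mp hmod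
    simpa using this

lemma sum_map_le_of_le {α : Type*} {s t : Multiset α} (h : s ≤ t) (f : α → ℕ) :
    (s.map f).sum ≤ (t.map f).sum := by
  have h1 : t - s + s = t := tsub_add_cancel_of_le h
  have h2 : (t.map f).sum = ((t - s).map f).sum + (s.map f).sum := by
    conv_lhs => rw [← h1]
    simp
  omega

/-- every factorization can be modified so that the number of non-top atoms is at most r_k -/
lemma reduce (r : Fin (κ + 1) → ℕ) (hN : 0 < r (Fin.last κ)) (c : ℕ) :
    ∀ M : Multiset (Fin (κ + 1)),
      Multiset.card (M.filter (· ≠ Fin.last κ)) ≤ c →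
      ∃ M' : Multiset (Fin (κ + 1)), (M'.map r).sum = (M.map r).sum ∧
        Multiset.card (M'.filter (· ≠ Fin.last κ)) ≤ r (Fin.last κ) := by
  induction c with
  | zero => exact fun M h => ⟨M, rfl, by omega⟩
  | succ c ih =>
    intro M h
    by_cases hle : Multiset.card (M.filter (· ≠ Fin.last κ)) ≤ r (Fin.last κ)
    · exact ⟨M, rfl, hle⟩
    · push_neg at hle
      set N := r (Fin.last κ) with hNdef
      set M₀ := M.filter (· ≠ Fin.last κ) with hM₀
      have hlen : N ≤ M₀.toList.length := by
        rw [Multiset.length_toList]; omega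
      obtain ⟨t, htne, hsub, hdvd⟩ := exists_block N hN r M₀.toList hlen
      set B : Multiset (Fin (κ + 1)) := (t : Multiset (Fin (κ + 1))) with hB
      have hBM₀ : B ≤ M₀ := by
        have h1 : B ≤ (M₀.toList : Multiset (Fin (κ + 1))) := hsub.subperm
        rwa [Multiset.coe_toList] at h1
      have hBM : B ≤ M := hBM₀.trans (Multiset.filter_le _ _)
      have hBcard : 0 < Multiset.card B := by
        simpa [hB] using List.length_pos_iff.mpr htne
      have hBsum : (B.map r).sum = (t.map r).sum := by simp [hB]
      obtain ⟨c', hc'⟩ := hdvd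
      have hBfilter : B.filter (· ≠ Fin.last κ) = B := by
        rw [Multiset.filter_eq_self]
        intro a ha
        have h3 : a ∈ M₀ := Multiset.mem_of_le hBM₀ ha
        rw [hM₀] at h3
        exact (Multiset.mem_filter.mp h3).2
      set M' := (M - B) + Multiset.replicate c' (Fin.last κ) with hM'
      have hMB : M - B + B = M := tsub_add_cancel_of_le hBM
      have hsum : (M'.map r).sum = (M.map r).sum := by
        have h2 : (M.map r).sum = ((M - B).map r).sum + (B.map r).sum := by
          conv_lhs => rw [← hMB]
          simp
        rw [hM']
        simp [Multiset.map_replicate, Multiset.sum_replicate, h2, hBsum, hc']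
        ring
      have hcard : Multiset.card (M'.filter (· ≠ Fin.last κ)) ≤ c := by
        rw [hM', Multiset.filter_add, Multiset.filter_sub, hBfilter, ← hM₀]
        have hrep : (Multiset.replicate c' (Fin.last κ)).filter (· ≠ Fin.last κ) = 0 := by
          rw [Multiset.filter_eq_nil]
          intro a ha
          rw [Multiset.eq_of_mem_replicate ha]
          simp
        rw [hrep, add_zero, Multiset.card_sub hBM₀]
        omega
      obtain ⟨M'', h1, h2⟩ := ih M' hcard
      exact ⟨M'', h1.trans hsum, h2⟩

lemma sum_count_mul {κ : ℕ} (r : Fin κ → ℕ) (M : Multiset (Fin κ)) :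
    (M.map r).sum = ∑ j, Multiset.count j M * r j := by
  rw [Finset.sum_multiset_map_count]
  rw [← Finset.sum_subset (Finset.subset_univ M.toFinset)]
  · simp [smul_eq_mul]
  · intro x _ hx
    rw [Multiset.count_eq_zero_of_notMem (by simpa using hx)]
    simp

lemma sum_count_card {κ : ℕ} (M : Multiset (Fin κ)) :
    Multiset.card M = ∑ j, Multiset.count j M := by
  rw [← Multiset.toFinset_sum_count_eq]
  rw [← Finset.sum_subset (Finset.subset_univ M.toFinset)]
  intro x _ hx
  exact Multiset.count_eq_zero_of_notMem (by simpa using hx)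

lemma minLen_mul_le {κ : ℕ} (r : Fin (κ + 1) → ℕ) (hmono : StrictMono r) (hpos : 0 < r 0)
    {x : ℕ} (hx : memGen r x) :
    minLen r x * r (Fin.last κ) ≤ x + r (Fin.last κ) * r (Fin.last κ) := by
  set N := r (Fin.last κ) with hNdef
  have hN : 0 < N := hpos.trans_le (hmono.monotone (Fin.zero_le _))
  obtain ⟨z, hz⟩ := hx
  let F : Multiset (Fin (κ + 1)) →+ ℕ :=
    { toFun := fun s => (s.map r).sum
      map_zero' := by simp
      map_add' := fun a b => by simp }
  set M : Multiset (Fin (κ + 1)) := ∑ j, Multiset.replicate (z j) j with hM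
  have hMsum : (M.map r).sum = x := by
    show F M = x
    rw [hM, map_sum, hz]
    refine Finset.sum_congr rfl fun j _ => ?_
    show ((Multiset.replicate (z j) j).map r).sum = z j * r j
    rw [Multiset.map_replicate, Multiset.sum_replicate, smul_eq_mul]
  obtain ⟨M', hM'sum, hM'card⟩ := reduce r hN (Multiset.card (M.filter (· ≠ Fin.last κ))) M le_rfl
  have hx' : x = ∑ j, Multiset.count j M' * r j := by
    rw [← sum_count_mul, hM'sum, hMsum]
  have hlen : Multiset.card M' ∈ lenSet r x :=
    ⟨fun j => Multiset.count j M', hx', sum_count_card M'⟩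
  have hminle : minLen r x ≤ Multiset.card M' := minLen_le hlen
  -- bound (card M') * N
  have hsplitc : Multiset.card M'
      = Multiset.card (M'.filter (· ≠ Fin.last κ))
        + Multiset.card (M'.filter fun a => ¬ a ≠ Fin.last κ) := by
    rw [← Multiset.card_add, Multiset.filter_add_not]
  have hfilt : (M'.filter fun a => ¬ a ≠ Fin.last κ)
      = Multiset.replicate (Multiset.count (Fin.last κ) M') (Fin.last κ) := by
    rw [← Multiset.filter_eq' M' (Fin.last κ)]
    congr 1
    ext a
    simp
  have htop : Multiset.card (M'.filter fun a => ¬ a ≠ Fin.last κ) * N ≤ x := by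
    calc Multiset.card (M'.filter fun a => ¬ a ≠ Fin.last κ) * N
        = ((M'.filter fun a => ¬ a ≠ Fin.last κ).map r).sum := by
          rw [hfilt, Multiset.map_replicate, Multiset.sum_replicate, smul_eq_mul,
            Multiset.card_replicate]
      _ ≤ (M'.map r).sum := sum_map_le_of_le (Multiset.filter_le _ _) r
      _ = x := by rw [hM'sum, hMsum]
  calc minLen r x * N ≤ Multiset.card M' * N := Nat.mul_le_mul_right _ hminle
    _ = Multiset.card (M'.filter (· ≠ Fin.last κ)) * N
        + Multiset.card (M'.filter fun a => ¬ a ≠ Fin.last κ) * N := by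
          rw [hsplitc, Nat.add_mul]
    _ ≤ N * N + x := by
        have h1 : Multiset.card (M'.filter (· ≠ Fin.last κ)) * N ≤ N * N :=
          Nat.mul_le_mul_right _ hM'card
        omega
    _ = x + N * N := Nat.add_comm _ _

lemma le_mul_top {κ : ℕ} {r : Fin (κ + 1) → ℕ} (hmono : StrictMono r) {s q : ℕ}
    (hq : q ∈ lenSet r s) : s ≤ q * r (Fin.last κ) := by
  obtain ⟨z, hz, hqz⟩ := hq
  rw [hz, hqz, Finset.sum_mul]
  exact Finset.sum_le_sum fun j _ =>
    Nat.mul_le_mul_left _ (hmono.monotone (Fin.le_last j))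

lemma shift_decomp {κ : ℕ} {r : Fin (κ + 1) → ℕ} {n a ℓ : ℕ}
    (h : ℓ ∈ lenSet (shiftGen n r) a) :
    ∃ s p, a = ℓ * n + s ∧ p ≤ ℓ ∧ p ∈ lenSet r s := by
  obtain ⟨z, hz, hl⟩ := h
  refine ⟨∑ i : Fin (κ + 1), z i.succ * r i, ∑ i : Fin (κ + 1), z i.succ, ?_, ?_,
    ⟨fun i => z i.succ, rfl, rfl⟩⟩
  · rw [hz, hl,
      Fin.sum_univ_succ (f := fun i : Fin (κ + 1 + 1) => z i * shiftGen n r i),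
      Fin.sum_univ_succ (f := fun i : Fin (κ + 1 + 1) => z i)]
    simp only [shiftGen, Fin.cons_zero, Fin.cons_succ]
    have h1 : ∀ j : Fin (κ + 1), z j.succ * (n + r j) = z j.succ * n + z j.succ * r j :=
      fun j => Nat.mul_add _ _ _
    rw [Finset.sum_congr rfl fun j _ => h1 j, Finset.sum_add_distrib, ← Finset.sum_mul]
    ring
  · rw [hl, Fin.sum_univ_succ (f := fun i : Fin (κ + 1 + 1) => z i)]
    omega

lemma shift_mem {κ : ℕ} {r : Fin (κ + 1) → ℕ} {n s p ℓ : ℕ}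
    (hp : p ∈ lenSet r s) (hpl : p ≤ ℓ) :
    ℓ ∈ lenSet (shiftGen n r) (ℓ * n + s) := by
  obtain ⟨z, hz, hps⟩ := hp
  refine ⟨Fin.cons (ℓ - p) z, ?_, ?_⟩
  · rw [Fin.sum_univ_succ]
    simp only [shiftGen, Fin.cons_zero, Fin.cons_succ]
    have h1 : ∀ j : Fin (κ + 1), z j * (n + r j) = z j * n + z j * r j :=
      fun j => Nat.mul_add _ _ _
    rw [Finset.sum_congr rfl fun j _ => h1 j, Finset.sum_add_distrib, ← Finset.sum_mul,
      ← hz, ← hps]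
    have h2 : (ℓ - p) * n + p * n = ℓ * n := by
      rw [← Nat.add_mul, Nat.sub_add_cancel hpl]
    omega
  · rw [Fin.sum_univ_succ]
    simp only [Fin.cons_zero, Fin.cons_succ, ← hps]
    omega

lemma core {κ : ℕ} {r : Fin (κ + 1) → ℕ} (hmono : StrictMono r) (hpos : 0 < r 0)
    {n a ℓ ℓ' s' : ℕ} (hn : n > r (Fin.last κ) ^ 2) (hlt : ℓ < ℓ')
    (hl : ℓ ∈ lenSet (shiftGen n r) a) (ha : a = ℓ' * n + s')
    (hs' : memGen r s') (hmin : minLen r s' = ℓ') : False := by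
  set N := r (Fin.last κ) with hNdef
  obtain ⟨s, p, haℓ, hpℓ, hps⟩ := shift_decomp hl
  have h1 : s ≤ p * N := le_mul_top hmono hps
  have hkey : ℓ' * n = ℓ * n + (ℓ' - ℓ) * n := by
    rw [← Nat.add_mul, Nat.add_sub_cancel' hlt.le]
  have h2 : s = (ℓ' - ℓ) * n + s' := by
    have h0 : ℓ * n + s = ℓ * n + ((ℓ' - ℓ) * n + s') := by
      rw [← haℓ, ha, hkey, Nat.add_assoc]
    exact Nat.add_left_cancel h0
  have h3 : n + s' ≤ s := by
    rw [h2]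
    have : 1 * n ≤ (ℓ' - ℓ) * n := Nat.mul_le_mul_right n (by omega)
    omega
  have h4 : ℓ' * N ≤ s' + N * N := by
    rw [← hmin]
    exact minLen_mul_le r hmono hpos hs'
  have h5 : N * N < n := by
    have := hn
    rwa [pow_two] at this
  have h6 : p * N ≤ ℓ * N := Nat.mul_le_mul_right _ hpℓ
  have h7 : ℓ * N ≤ ℓ' * N := Nat.mul_le_mul_right _ hlt.le
  omega
end Aux

/-- Under `n > r_k²`, `gcd(n,d) = 1`, `dn ∈ S`: for each `i ∈ Ap(S; dn)`,
the element `a = i + m_S(i)·n` of `M_n` has `L_{M_n}(a) = {m_S(i)}`.  In particular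
`M_n` is homogeneous: every element of `Ap(M_n; n)` has a unique factorization length. -/
theorem length_singleton {k : ℕ} (r : Fin (k + 1) → ℕ)
    (hmono : StrictMono r) (hpos : 0 < r 0)
    (d : ℕ) (hd : d = Finset.univ.gcd r)
    (n : ℕ) (hn : n > (r (Fin.last k)) ^ 2)
    (hgcd : Nat.gcd n d = 1) (hdn : memGen r (d * n)) :
    (∀ i ∈ aperySet r (d * n),
        lenSet (shiftGen n r) (i + minLen r i * n) = {minLen r i}) ∧
      (∀ a ∈ aperySet (shiftGen n r) n, ∃ ℓ : ℕ, lenSet (shiftGen n r) a = {ℓ}) := by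
  constructor
  · -- Part 1
    intro i hi
    obtain ⟨himem, hap⟩ := hi
    set m := minLen r i with hm
    have hm_mem : m ∈ lenSet r i := minLen_mem himem
    have ha_mem : m ∈ lenSet (shiftGen n r) (i + m * n) := by
      have h0 : i + m * n = m * n + i := Nat.add_comm _ _
      rw [h0]
      exact shift_mem hm_mem le_rfl
    refine Set.eq_singleton_iff_unique_mem.mpr ⟨ha_mem, ?_⟩
    intro ℓ' hℓ'
    rcases lt_trichotomy ℓ' m with h | h | h
    · exact (core hmono hpos hn h hℓ' (add_comm i (m * n)) himem rfl).elim
    · exact h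
    · exfalso
      obtain ⟨s', p', ha, hp'ℓ, hps'⟩ := shift_decomp hℓ'
      have hs'mem : memGen r s' := memGen_of_lenSet hps'
      have hkey : ℓ' * n = m * n + (ℓ' - m) * n := by
        rw [← Nat.add_mul, Nat.add_sub_cancel' h.le]
      have h7 : i = (ℓ' - m) * n + s' := by
        have h6 : m * n + i = m * n + ((ℓ' - m) * n + s') := by
          rw [add_comm (m * n) i, ha, hkey, Nat.add_assoc]
        exact Nat.add_left_cancel h6
      set u := ℓ' - m with hu'
      have hu : 0 < u := by omega
      have hdi : d ∣ i := hd ▸ gcd_dvd_memGen himem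
      have hds' : d ∣ s' := hd ▸ gcd_dvd_memGen hs'mem
      have hdun : d ∣ u * n := by
        have h8 : i - s' = u * n := by rw [h7, Nat.add_sub_cancel]
        exact h8 ▸ Nat.dvd_sub hdi hds'
      have hdu : d ∣ u := (Nat.Coprime.symm hgcd).dvd_of_dvd_mul_right hdun
      have hdleu : d ≤ u := Nat.le_of_dvd hu hdu
      obtain ⟨c, hc⟩ := Nat.dvd_sub hdu (dvd_refl d)
      have hiu : i - d * n = (u - d) * n + s' := by
        have h9 : u * n = d * n + (u - d) * n := by
          rw [← Nat.add_mul, Nat.add_sub_cancel' hdleu]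
        rw [h7, h9, Nat.add_assoc, Nat.add_sub_cancel_left]
      have hmemsub : memGen r (i - d * n) := by
        rw [hiu, hc]
        have h10 : d * c * n = c * (d * n) := by ring
        rw [h10]
        exact memGen_add (memGen_mul c hdn) hs'mem
      have hdnle : d * n ≤ i := by
        rw [h7]
        calc d * n ≤ u * n := Nat.mul_le_mul_right _ hdleu
          _ ≤ u * n + s' := Nat.le_add_right _ _
      exact hap ⟨hdnle, hmemsub⟩
  · -- Part 2
    intro a ha
    obtain ⟨hamem, hap⟩ := ha
    have hne : (lenSet (shiftGen n r) a).Nonempty := lenSet_nonempty hamem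
    set ℓ := sInf (lenSet (shiftGen n r) a) with hℓdef
    have hℓ : ℓ ∈ lenSet (shiftGen n r) a := Nat.sInf_mem hne
    refine ⟨ℓ, Set.eq_singleton_iff_unique_mem.mpr ⟨hℓ, ?_⟩⟩
    intro ℓ' hℓ'
    by_contra hneq
    have hlt : ℓ < ℓ' := lt_of_le_of_ne (Nat.sInf_le hℓ') fun h => hneq h.symm
    obtain ⟨s', p', haeq, hp'ℓ, hps'⟩ := shift_decomp hℓ'
    have hs'mem : memGen r s' := memGen_of_lenSet hps'
    have hone : 1 ≤ ℓ' := by omega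
    have hminle : minLen r s' ≤ ℓ' := le_trans (minLen_le hps') hp'ℓ
    have hmineq : minLen r s' = ℓ' := by
      by_contra hne2
      have hlt2 : minLen r s' ≤ ℓ' - 1 := by omega
      have hmm := minLen_mem hs'mem
      have hmem2 : (ℓ' - 1) ∈ lenSet (shiftGen n r) ((ℓ' - 1) * n + s') :=
        shift_mem hmm hlt2
      have hsplit : ℓ' * n = n + (ℓ' - 1) * n := by
        conv_lhs => rw [← Nat.sub_add_cancel hone]
        rw [Nat.add_mul, one_mul, Nat.add_comm]
      have haeq2 : a - n = (ℓ' - 1) * n + s' := by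
        have h11 : a = n + ((ℓ' - 1) * n + s') := by
          rw [haeq, hsplit, Nat.add_assoc]
        rw [h11, Nat.add_sub_cancel_left]
      have hnlea : n ≤ a := by
        rw [haeq]
        calc n = 1 * n := (one_mul n).symm
          _ ≤ ℓ' * n := Nat.mul_le_mul_right _ hone
          _ ≤ ℓ' * n + s' := Nat.le_add_right _ _
      exact hap ⟨hnlea, memGen_of_lenSet (haeq2 ▸ hmem2)⟩
    exact core hmono hpos hn hlt hℓ haeq hs'mem hmineq
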